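/- Let r > 0, c > 0, λ > 0, m > 0, and d > 1 the larger root of r d^2 − (r+λ+m)d + λ = 0. Define π*(w) = ((μ−r)/σ^2)(c − rw)/((d−1) r) for 0 ≤ w ≤ c/r, and φ(w) = (1 − rw/c)^d. Then the identity (μ−r) π*(w) φ'(w) + (1/2) σ^2 π*(w)^2 φ''(w) = −m φ'(w)^2/φ''(w) holds for all w ∈ (0, c/r); that is, π* achieves the pointwise minimum in the HJB operator. -/

import Mathlib

theorem stmt18 (r c lam m μ σ d : ℝ) (hr : 0 < r) (hc : 0 < c) (hlam : 0 < lam)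
    (hσ : 0 < σ) (hμ : r < μ) (hm : m = ((μ - r) / σ) ^ 2 / 2) (hd1 : 1 < d)
    (hdq : r * d ^ 2 - (r + lam + m) * d + lam = 0)
    (hdmax : ∀ d' : ℝ, r * d' ^ 2 - (r + lam + m) * d' + lam = 0 → d' ≤ d) :
    ∀ w ∈ Set.Ioo (0 : ℝ) (c / r),
      (μ - r) * (((μ - r) / σ ^ 2) * (c - r * w) / ((d - 1) * r))
          * deriv (fun w' : ℝ => (1 - r * w' / c) ^ d) w
        + (1 / 2) * σ ^ 2 * (((μ - r) / σ ^ 2) * (c - r * w) / ((d - 1) * r)) ^ 2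
          * deriv (deriv (fun w' : ℝ => (1 - r * w' / c) ^ d)) w
      = -m * (deriv (fun w' : ℝ => (1 - r * w' / c) ^ d) w) ^ 2
          / deriv (deriv (fun w' : ℝ => (1 - r * w' / c) ^ d)) w := by
  intro w hw
  have hg : ∀ x : ℝ, HasDerivAt (fun w' : ℝ => 1 - r * w' / c) (-(r / c)) x := by
    intro x
    simpa using ((hasDerivAt_id x).const_mul r |>.div_const c).const_sub 1
  have hB : ∀ x : ℝ, HasDerivAt (fun w' : ℝ => (1 - r * w' / c) ^ d)
      (-(r / c) * d * (1 - r * x / c) ^ (d - 1)) x := fun x =>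
    (hg x).rpow_const (Or.inr hd1.le)
  have hderiv1 : deriv (fun w' : ℝ => (1 - r * w' / c) ^ d)
      = fun x => -(r / c) * d * (1 - r * x / c) ^ (d - 1) :=
    funext fun x => (hB x).deriv
  have hu : 0 < 1 - r * w / c := by
    have : r * w < c := by
      have := hw.2
      rw [lt_div_iff₀ hr] at this
      linarith [this]
    have : r * w / c < 1 := (div_lt_one hc).2 this
    linarith
  have hB2 : HasDerivAt (fun x : ℝ => -(r / c) * d * (1 - r * x / c) ^ (d - 1))
      (-(r / c) * d * (-(r / c) * (d - 1) * (1 - r * w / c) ^ (d - 1 - 1))) w :=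
    ((hg w).rpow_const (Or.inl hu.ne')).const_mul _
  have hderiv2 : deriv (deriv (fun w' : ℝ => (1 - r * w' / c) ^ d)) w
      = -(r / c) * d * (-(r / c) * (d - 1) * (1 - r * w / c) ^ (d - 1 - 1)) := by
    rw [hderiv1]
    exact hB2.deriv
  rw [hderiv2, hderiv1]
  beta_reduce
  set u := 1 - r * w / c with hu_def
  have hurw : c - r * w = c * u := by
    rw [hu_def, mul_sub, mul_one, mul_div_assoc', mul_div_cancel_left₀ _ hc.ne']
  have e1 : u ^ (d - 1) = u ^ (d - 1 - 1) * u := by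
    rw [← Real.rpow_add_one hu.ne']; ring_nf
  have hσ' : (σ : ℝ) ≠ 0 := hσ.ne'
  have hd1' : d - 1 ≠ 0 := by linarith
  have hd0 : d ≠ 0 := by positivity
  have hup : (0:ℝ) < u ^ (d - 1 - 1) := Real.rpow_pos_of_pos hu _
  rw [hurw, hm, e1]
  field_simp
  ring
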